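/- arXiv:2605.09057 — 2 statements merged into one kernel-verified Lean document; each statement's English description precedes it below -/
import Mathlib

section
/- Let H be a complex Hilbert space, let n ≥ 1, and let L : ℂⁿ → H be a linear map admitting a singular value decomposition in the following sense: there exist an orthonormal basis (v_j)_{j=1}^{n} of ℂⁿ (with the standard inner product), an orthonormal family (u_j)_{j=1}^{n} in H, and real numbers σ_1 ≥ σ_2 ≥ ⋯ ≥ σ_n ≥ 0 such that L v_j = σ_j u_j for all j. Fix ε > 0 and define the TSVD-regularized approximation operator Q_ε : H → H by Q_ε g = Σ_{j : σ_j > ε} ⟨u_j, g⟩ u_j. Then for every g ∈ H and every c ∈ ℂⁿ one has ‖g - Q_ε g‖_H ≤ ‖g - L c‖_H + ε · ‖c‖_2. -/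
open scoped ComplexInnerProductSpace

/-- Bessel-type: removing a partial Fourier sum doesn't increase the norm. -/
theorem tsvd_aux_bessel {H : Type*} [NormedAddCommGroup H] [InnerProductSpace ℂ H]
    {ι : Type*} {u : ι → H} (hu : Orthonormal ℂ u) (s : Finset ι) (h : H) :
    ‖h - ∑ j ∈ s, (inner ℂ (u j) h : ℂ) • u j‖ ≤ ‖h‖ := by
  set Q : H := ∑ j ∈ s, (inner ℂ (u j) h : ℂ) • u j with hQ
  have h1 : (inner ℂ Q h : ℂ) = ∑ j ∈ s, (starRingEnd ℂ) (inner ℂ (u j) h : ℂ) * (inner ℂ (u j) h) := by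
    rw [hQ, sum_inner]
    exact Finset.sum_congr rfl fun j hj => by rw [inner_smul_left]
  have h2 : (inner ℂ Q Q : ℂ) = ∑ j ∈ s, (starRingEnd ℂ) (inner ℂ (u j) h : ℂ) * (inner ℂ (u j) h) :=
    hu.inner_sum _ _ s
  have horth : (inner ℂ Q (h - Q) : ℂ) = 0 := by rw [inner_sub_right, h1, h2, sub_self]
  have key : ‖h‖ ^ 2 = ‖Q‖ ^ 2 + ‖h - Q‖ ^ 2 := by
    have := norm_add_sq (𝕜 := ℂ) Q (h - Q)
    simpa [horth] using this
  nlinarith [norm_nonneg h, norm_nonneg (h - Q), norm_nonneg Q, sq_nonneg ‖Q‖]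

/-- Norm of a linear combination of orthonormal vectors. -/
theorem tsvd_aux_norm_sum {H : Type*} [NormedAddCommGroup H] [InnerProductSpace ℂ H]
    {ι : Type*} {u : ι → H} (hu : Orthonormal ℂ u) (s : Finset ι) (l : ι → ℂ) :
    ‖∑ j ∈ s, l j • u j‖ ^ 2 = ∑ j ∈ s, ‖l j‖ ^ 2 := by
  have h2 : (inner ℂ (∑ j ∈ s, l j • u j) (∑ j ∈ s, l j • u j) : ℂ)
      = ∑ j ∈ s, ((‖l j‖ : ℂ)) ^ 2 := by
    rw [hu.inner_sum l l s]
    exact Finset.sum_congr rfl fun j _ => by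
      rw [RCLike.conj_mul]; norm_cast
  rw [inner_self_eq_norm_sq_to_K (𝕜 := ℂ)] at h2
  have h3 : ((‖∑ j ∈ s, l j • u j‖ ^ 2 : ℝ) : ℂ) = ((∑ j ∈ s, ‖l j‖ ^ 2 : ℝ) : ℂ) := by
    push_cast; exact h2
  exact_mod_cast h3

open scoped ComplexInnerProductSpace in
/-- TSVD quasi-optimality: if `L : ℂⁿ → H` has a singular value decomposition
`L (v j) = σ j • u j` with `(v j)` an orthonormal basis of `ℂⁿ`, `(u j)` orthonormal in `H`,
and `σ_1 ≥ ⋯ ≥ σ_n ≥ 0`, and `Q_ε g = ∑_{σ j > ε} ⟪u j, g⟫ • u j` is the TSVD-regularized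
approximation, then `‖g - Q_ε g‖ ≤ ‖g - L c‖ + ε * ‖c‖₂` for every `g ∈ H`, `c ∈ ℂⁿ`. -/
theorem tsvd_quasi_optimal {H : Type*} [NormedAddCommGroup H] [InnerProductSpace ℂ H]
    [CompleteSpace H] (n : ℕ) (hn : 1 ≤ n)
    (L : EuclideanSpace ℂ (Fin n) →ₗ[ℂ] H)
    (v : OrthonormalBasis (Fin n) ℂ (EuclideanSpace ℂ (Fin n)))
    (u : Fin n → H) (hu : Orthonormal ℂ u)
    (σ : Fin n → ℝ) (hσ0 : ∀ j, 0 ≤ σ j)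
    (hσmono : ∀ i j : Fin n, i ≤ j → σ j ≤ σ i)
    (hL : ∀ j, L (v j) = (σ j : ℂ) • u j)
    (ε : ℝ) (hε : 0 < ε)
    (g : H) (c : EuclideanSpace ℂ (Fin n)) :
    ‖g - ∑ j ∈ Finset.univ.filter (fun j => ε < σ j), (inner ℂ (u j) g : ℂ) • u j‖
      ≤ ‖g - L c‖ + ε * ‖c‖ := by
  classical
  set S : Finset (Fin n) := Finset.univ.filter (fun j => ε < σ j) with hS
  set l : Fin n → ℂ := fun j => (inner ℂ (v j) c : ℂ) * (σ j : ℂ) with hl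
  -- L c as a combination of the u j
  have hLc : L c = ∑ j, l j • u j := by
    conv_lhs => rw [← v.sum_repr' c]
    rw [map_sum]
    exact Finset.sum_congr rfl fun j _ => by
      rw [map_smul, hL j, smul_smul, hl]
  -- Q (L c)
  have hQLc : ∑ j ∈ S, (inner ℂ (u j) (L c) : ℂ) • u j = ∑ j ∈ S, l j • u j := by
    refine Finset.sum_congr rfl fun j _ => ?_
    rw [hLc, hu.inner_right_fintype l j]
  -- the residual of L c
  have hres : L c - ∑ j ∈ S, (inner ℂ (u j) (L c) : ℂ) • u j
      = ∑ j ∈ Finset.univ.filter (fun j => ¬ ε < σ j), l j • u j := by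
    rw [hQLc, hLc, hS, ← Finset.sum_filter_add_sum_filter_not Finset.univ (fun j => ε < σ j)]
    abel
  -- bound on the residual of L c
  have hresle : ‖L c - ∑ j ∈ S, (inner ℂ (u j) (L c) : ℂ) • u j‖ ≤ ε * ‖c‖ := by
    rw [hres]
    have hsq : ‖∑ j ∈ Finset.univ.filter (fun j => ¬ ε < σ j), l j • u j‖ ^ 2
        = ∑ j ∈ Finset.univ.filter (fun j => ¬ ε < σ j), ‖l j‖ ^ 2 :=
      tsvd_aux_norm_sum hu _ l
    have hcsq : ‖c‖ ^ 2 = ∑ j, ‖(inner ℂ (v j) c : ℂ)‖ ^ 2 := by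
      have h2 : (inner ℂ c c : ℂ) = ∑ j, ((‖(inner ℂ (v j) c : ℂ)‖ : ℂ)) ^ 2 := by
        rw [← v.sum_inner_mul_inner c c]
        refine Finset.sum_congr rfl fun j _ => ?_
        rw [← inner_conj_symm c (v j), RCLike.conj_mul]; norm_cast
      rw [inner_self_eq_norm_sq_to_K (𝕜 := ℂ)] at h2
      have h3 : ((‖c‖ ^ 2 : ℝ) : ℂ) = ((∑ j, ‖(inner ℂ (v j) c : ℂ)‖ ^ 2 : ℝ) : ℂ) := by
        push_cast; exact h2
      exact_mod_cast h3
    have hbound : ∑ j ∈ Finset.univ.filter (fun j => ¬ ε < σ j), ‖l j‖ ^ 2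
        ≤ ε ^ 2 * ‖c‖ ^ 2 := by
      rw [hcsq, Finset.mul_sum]
      calc ∑ j ∈ Finset.univ.filter (fun j => ¬ ε < σ j), ‖l j‖ ^ 2
          ≤ ∑ j ∈ Finset.univ.filter (fun j => ¬ ε < σ j),
              ε ^ 2 * ‖(inner ℂ (v j) c : ℂ)‖ ^ 2 := by
            refine Finset.sum_le_sum fun j hj => ?_
            have hjε : σ j ≤ ε := le_of_not_gt (by simpa using (Finset.mem_filter.mp hj).2)
            have : ‖l j‖ = ‖(inner ℂ (v j) c : ℂ)‖ * σ j := by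
              rw [hl]; simp [abs_of_nonneg (hσ0 j)]
            rw [this]
            have h1 : (‖(inner ℂ (v j) c : ℂ)‖ * σ j) ^ 2
                = σ j ^ 2 * ‖(inner ℂ (v j) c : ℂ)‖ ^ 2 := by ring
            rw [h1]
            have := sq_nonneg ‖(inner ℂ (v j) c : ℂ)‖
            have hσsq : σ j ^ 2 ≤ ε ^ 2 := by nlinarith [hσ0 j]
            nlinarith
        _ ≤ ∑ j, ε ^ 2 * ‖(inner ℂ (v j) c : ℂ)‖ ^ 2 := by
            refine Finset.sum_le_sum_of_subset_of_nonneg (Finset.filter_subset _ _)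
              fun j _ _ => by positivity
    have hfin : ‖∑ j ∈ Finset.univ.filter (fun j => ¬ ε < σ j), l j • u j‖ ^ 2
        ≤ (ε * ‖c‖) ^ 2 := by rw [hsq]; nlinarith
    have hεc : 0 ≤ ε * ‖c‖ := by positivity
    nlinarith [norm_nonneg (∑ j ∈ Finset.univ.filter (fun j => ¬ ε < σ j), l j • u j)]
  -- decomposition
  have hdecomp : g - ∑ j ∈ S, (inner ℂ (u j) g : ℂ) • u j
      = ((g - L c) - ∑ j ∈ S, (inner ℂ (u j) (g - L c) : ℂ) • u j)
        + (L c - ∑ j ∈ S, (inner ℂ (u j) (L c) : ℂ) • u j) := by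
    have : ∀ j, (inner ℂ (u j) g : ℂ) • u j
        = (inner ℂ (u j) (g - L c) : ℂ) • u j + (inner ℂ (u j) (L c) : ℂ) • u j := by
      intro j; rw [← add_smul, ← inner_add_right]
      rw [sub_add_cancel]
    rw [Finset.sum_congr rfl fun j _ => this j, Finset.sum_add_distrib]
    abel
  calc ‖g - ∑ j ∈ S, (inner ℂ (u j) g : ℂ) • u j‖
      ≤ ‖(g - L c) - ∑ j ∈ S, (inner ℂ (u j) (g - L c) : ℂ) • u j‖
        + ‖L c - ∑ j ∈ S, (inner ℂ (u j) (L c) : ℂ) • u j‖ := by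
        rw [hdecomp]; exact norm_add_le _ _
    _ ≤ ‖g - L c‖ + ε * ‖c‖ :=
        add_le_add (tsvd_aux_bessel hu S (g - L c)) hresle
end

section
/- Let N ≥ 1, set h = 2/N, and let t_j = -1 + j·h for j = 0,…,N be the equispaced nodes on [-1,1]. Let a = a_0 < a_1 < ⋯ < a_K = b be a partition of [a,b] with midpoints c_k = (a_{k-1}+a_k)/2, half-lengths s_k = (a_k - a_{k-1})/2, and maximal subinterval length h_I = max_k (a_k - a_{k-1}). Suppose f is (N+1)-times continuously differentiable on [a,b] with ‖f^{(N+1)}‖_{L^∞(a,b)} ≤ C_f, and set g_k(t) = f(c_k + s_k t) on [-1,1]. Let H = L²(-1,1) and let L : ℂ^{N+1} → H be a linear map with singular value decomposition L v_j = σ_j u_j, where (v_j) is an orthonormal basis of ℂ^{N+1}, (u_j) is an orthonormal family in H, and σ_j ≥ 0; fix ε > 0 and let Q_ε be the associated TSVD-regularized approximation operator Q_ε g = Σ_{j : σ_j > ε} ⟨u_j, g⟩ u_j. Suppose that for each k there is a vector c_k^{int} ∈ ℂ^{N+1} with L c_k^{int} equal (in L²(-1,1)) to the degree-N Lagrange interpolation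 polynomial of g_k at the nodes t_0,…,t_N. Define the global approximation (P f)(x) = (Q_ε g_k)((x - c_k)/s_k) for x ∈ [a_{k-1}, a_k). Then ‖f - P f‖²_{L²(a,b)} ≤ Σ_{k=1}^{K} s_k · ( √2 · (h_I^{N+1} / N^{N+1}) · C_f + ε · ‖c_k^{int}‖_2 )². -/
open MeasureTheory

section LLFPrelude
open MeasureTheory Set Finset



lemma polyIterDerivWithin {s : Set ℝ} (hs : UniqueDiffOn ℝ s) (n : ℕ) (q : Polynomial ℝ) :
    ∀ x ∈ s, iteratedDerivWithin n (fun y => q.eval y) s x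
      = (Polynomial.derivative^[n] q).eval x := by
  induction n generalizing q with
  | zero => simp
  | succ n ih =>
    intro x hx
    rw [iteratedDerivWithin_succ']
    have h1 : Set.EqOn (derivWithin (fun y => q.eval y) s) (fun y => q.derivative.eval y) s :=
      fun y hy => q.derivWithin (hs.uniqueDiffWithinAt hy)
    calc iteratedDerivWithin n (derivWithin (fun y => q.eval y) s) s x
        = iteratedDerivWithin n (fun y => q.derivative.eval y) s x :=
          iteratedDerivWithin_congr h1 hx
      _ = (Polynomial.derivative^[n] q.derivative).eval x := ih q.derivative x hx
      _ = _ := by rw [← Function.iterate_succ_apply]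

lemma gen_rolle {a b : ℝ} (hab : a < b) :
    ∀ (m : ℕ) (F : ℝ → ℝ), ContDiffOn ℝ m F (Set.Icc a b) →
    ∀ (x : ℕ → ℝ), (∀ i, i < m → x i < x (i+1)) → (∀ i, i ≤ m → x i ∈ Set.Icc a b) →
    (∀ i, i ≤ m → F (x i) = 0) →
    ∃ c ∈ Set.Icc a b, iteratedDerivWithin m F (Set.Icc a b) c = 0 := by
  intro m
  induction m with
  | zero =>
    intro F _ x _ hmem hz
    exact ⟨x 0, hmem 0 le_rfl, by simpa using hz 0 le_rfl⟩
  | succ m ih =>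
    intro F hF x hlt hmem hz
    have hcont : ContinuousOn F (Set.Icc a b) := hF.continuousOn
    have key : ∀ i, ∃ c, i < m + 1 →
        c ∈ Set.Ioo (x i) (x (i+1)) ∧ derivWithin F (Set.Icc a b) c = 0 := by
      intro i
      by_cases hi : i < m + 1
      · have h1 : x i < x (i+1) := hlt i hi
        have hmi : x i ∈ Set.Icc a b := hmem i (by omega)
        have hmi1 : x (i+1) ∈ Set.Icc a b := hmem (i+1) (by omega)
        obtain ⟨c, hc, hc0⟩ := exists_deriv_eq_zero h1
          (hcont.mono (Set.Icc_subset_Icc hmi.1 hmi1.2))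
          (by rw [hz i (by omega), hz (i+1) (by omega)])
        refine ⟨c, fun _ => ⟨hc, ?_⟩⟩
        have hcmem : Set.Icc a b ∈ nhds c :=
          Icc_mem_nhds (lt_of_le_of_lt hmi.1 hc.1) (lt_of_lt_of_le hc.2 hmi1.2)
        rw [derivWithin_of_mem_nhds hcmem]
        exact hc0
      · exact ⟨0, fun h => absurd h hi⟩
    choose y hy using key
    have hF' : ContDiffOn ℝ m (derivWithin F (Set.Icc a b)) (Set.Icc a b) :=
      hF.derivWithin (uniqueDiffOn_Icc hab) (by exact_mod_cast le_rfl)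
    obtain ⟨c, hc, hc0⟩ := ih (derivWithin F (Set.Icc a b)) hF' y
      (fun i hi => lt_trans ((hy i (by omega)).1.2)
        (lt_of_le_of_lt (le_refl _) (hy (i+1) (by omega)).1.1))
      (fun i hi =>
        ⟨le_trans (hmem i (by omega)).1 (le_of_lt (hy i (by omega)).1.1),
         le_trans (le_of_lt (hy i (by omega)).1.2) (hmem (i+1) (by omega)).2⟩)
      (fun i hi => (hy i (by omega)).2)
    refine ⟨c, hc, ?_⟩
    rw [iteratedDerivWithin_succ']
    exact hc0



lemma iter_affine {a' b' c s : ℝ} (hs : 0 < s) (hab : a' < b') {f : ℝ → ℝ} {n : ℕ}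
    (hf : ContDiffOn ℝ n f (Icc a' b'))
    (hmap : ∀ t ∈ Icc (-1:ℝ) 1, c + s * t ∈ Icc a' b') :
    ∀ m, m ≤ n → ∀ t ∈ Icc (-1:ℝ) 1,
      iteratedDerivWithin m (fun t => f (c + s * t)) (Icc (-1:ℝ) 1) t
        = s ^ m * iteratedDerivWithin m f (Icc a' b') (c + s * t) := by
  have hud : UniqueDiffOn ℝ (Icc (-1:ℝ) 1) := uniqueDiffOn_Icc (by norm_num)
  have hud' : UniqueDiffOn ℝ (Icc a' b') := uniqueDiffOn_Icc hab
  intro m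
  induction m with
  | zero => intro _ t ht; simp
  | succ m ih =>
    intro hmn t ht
    have hmn' : (m : ℕ) ≤ n := by omega
    have hmlt : (m : WithTop ℕ∞) < (n : WithTop ℕ∞) := by exact_mod_cast (by omega : m < n)
    have hdF : DifferentiableOn ℝ (iteratedDerivWithin m f (Icc a' b')) (Icc a' b') :=
      hf.differentiableOn_iteratedDerivWithin hmlt hud'
    rw [iteratedDerivWithin_succ]
    have hcongr : Set.EqOn (iteratedDerivWithin m (fun t => f (c + s * t)) (Icc (-1:ℝ) 1))
        (fun t => s ^ m * iteratedDerivWithin m f (Icc a' b') (c + s * t)) (Icc (-1:ℝ) 1) :=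
      fun y hy => ih hmn' y hy
    rw [derivWithin_congr hcongr (hcongr ht)]
    -- derivative of the affine map
    have haff : HasDerivWithinAt (fun t : ℝ => c + s * t) s (Icc (-1:ℝ) 1) t := by
      simpa using (((hasDerivAt_id t).const_mul s).const_add c).hasDerivWithinAt
    have hFm : HasDerivWithinAt (iteratedDerivWithin m f (Icc a' b'))
        (derivWithin (iteratedDerivWithin m f (Icc a' b')) (Icc a' b') (c + s * t))
        (Icc a' b') (c + s * t) :=
      (hdF (c + s * t) (hmap t ht)).hasDerivWithinAt
    have hcomp : HasDerivWithinAt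
        (fun y => iteratedDerivWithin m f (Icc a' b') (c + s * y))
        (derivWithin (iteratedDerivWithin m f (Icc a' b')) (Icc a' b') (c + s * t) * s)
        (Icc (-1:ℝ) 1) t :=
      HasDerivWithinAt.comp t (h := fun t : ℝ => c + s * t) hFm haff (fun y hy => hmap y hy)
    have : HasDerivWithinAt
        (fun y => s ^ m * iteratedDerivWithin m f (Icc a' b') (c + s * y))
        (s ^ m * (derivWithin (iteratedDerivWithin m f (Icc a' b')) (Icc a' b') (c + s * t) * s))
        (Icc (-1:ℝ) 1) t := hcomp.const_mul (s ^ m)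
    rw [this.derivWithin (hud.uniqueDiffWithinAt ht)]
    rw [iteratedDerivWithin_succ]
    ring

section WithNat
open Nat Polynomial


lemma prod_nat_bound (N m : ℕ) (hm : m ≤ N) :
    (∏ j ∈ range (N + 1), (if j ≤ m then m + 1 - j else j - m)) ≤ (N + 1)! := by
  have hsplit : N + 1 = (m + 1) + (N - m) := by omega
  rw [hsplit, Finset.prod_range_add]
  have h1 : (∏ j ∈ range (m + 1), (if j ≤ m then m + 1 - j else j - m)) = (m + 1)! := by
    rw [show (∏ j ∈ range (m + 1), (if j ≤ m then m + 1 - j else j - m))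
        = ∏ j ∈ range (m + 1), ((m + 1 - 1 - j) + 1) by
      apply Finset.prod_congr rfl; intro j hj
      simp only [Finset.mem_range] at hj
      rw [if_pos (by omega)]; omega]
    rw [Finset.prod_range_reflect (fun i => i + 1) (m + 1)]
    exact Finset.prod_range_add_one_eq_factorial (m + 1)
  have h2 : (∏ j ∈ range (N - m), (if (m + 1 + j) ≤ m then m + 1 - (m + 1 + j) else (m + 1 + j) - m)) = (N - m)! := by
    rw [show (∏ j ∈ range (N - m), (if (m + 1 + j) ≤ m then m + 1 - (m + 1 + j) else (m + 1 + j) - m))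
        = ∏ j ∈ range (N - m), (j + 1) by
      apply Finset.prod_congr rfl; intro j hj
      rw [if_neg (by omega)]; omega]
    exact Finset.prod_range_add_one_eq_factorial (N - m)
  rw [h1, h2]
  have := Nat.choose_mul_factorial_mul_factorial (show m + 1 ≤ N + 1 by omega)
  have hpos : 1 ≤ (N + 1).choose (m + 1) := Nat.choose_pos (by omega)
  rw [show m + 1 + (N - m) = N + 1 by omega]
  calc (m + 1)! * (N - m)! ≤ (N + 1).choose (m + 1) * ((m + 1)! * (N - m)!) :=
        Nat.le_mul_of_pos_left _ hpos
    _ = (N + 1)! := by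
        rw [show N + 1 - (m + 1) = N - m by omega] at this
        rw [← mul_assoc]; exact this

lemma prod_bound (N : ℕ) (hN : 1 ≤ N) (t : ℕ → ℝ) (ht : ∀ j, t j = -1 + j * (2 / N))
    (x : ℝ) (hx : x ∈ Icc (-1:ℝ) 1) :
    ∏ j ∈ range (N + 1), |x - t j| ≤ (2 / N) ^ (N + 1) * (N + 1)! := by
  have hNpos : (0:ℝ) < N := by exact_mod_cast hN
  set h : ℝ := 2 / N with hh
  have hhpos : 0 < h := by positivity
  set s : ℝ := (x + 1) / h with hs
  have hs0 : 0 ≤ s := by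
    apply div_nonneg _ hhpos.le
    linarith [hx.1]
  have hsN : s ≤ N := by
    rw [hs, div_le_iff₀ hhpos, hh]
    have : (N:ℝ) * (2 / N) = 2 := by field_simp
    rw [this]; linarith [hx.2]
  have hfac : ∀ j, x - t j = h * (s - j) := by
    intro j
    rw [ht j, hs, hh]
    field_simp
    ring
  set m : ℕ := ⌊s⌋₊ with hm
  have hmN : m ≤ N := by
    have := Nat.floor_le_floor hsN
    simpa using this
  have hms : (m:ℝ) ≤ s := Nat.floor_le hs0
  have hsm1 : s < m + 1 := Nat.lt_floor_add_one s
  have key : ∀ j ∈ range (N + 1), |s - j| ≤ ((if j ≤ m then m + 1 - j else j - m : ℕ) : ℝ) := by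
    intro j hj
    by_cases hjm : j ≤ m
    · rw [if_pos hjm, abs_of_nonneg (by
        have : (j:ℝ) ≤ m := by exact_mod_cast hjm
        linarith)]
      have : ((m + 1 - j : ℕ):ℝ) = (m:ℝ) + 1 - j := by
        push_cast [Nat.cast_sub (by omega : j ≤ m + 1)]; ring
      rw [this]; linarith
    · rw [if_neg hjm, abs_of_nonpos (by
        have : (m:ℝ) + 1 ≤ j := by exact_mod_cast (by omega : m + 1 ≤ j)
        linarith)]
      have : ((j - m : ℕ):ℝ) = (j:ℝ) - m := by
        push_cast [Nat.cast_sub (by omega : m ≤ j)]; ring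
      rw [this]; linarith
  calc ∏ j ∈ range (N + 1), |x - t j|
      = ∏ j ∈ range (N + 1), (h * |s - j|) := by
        apply Finset.prod_congr rfl; intro j _
        rw [hfac j, abs_mul, abs_of_pos hhpos]
    _ = h ^ (N + 1) * ∏ j ∈ range (N + 1), |s - j| := by
        rw [Finset.prod_mul_distrib, Finset.prod_const, Finset.card_range]
    _ ≤ h ^ (N + 1) * ∏ j ∈ range (N + 1), ((if j ≤ m then m + 1 - j else j - m : ℕ) : ℝ) := by
        apply mul_le_mul_of_nonneg_left _ (by positivity)
        exact Finset.prod_le_prod (fun j _ => abs_nonneg _) key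
    _ = h ^ (N + 1) * ((∏ j ∈ range (N + 1), (if j ≤ m then m + 1 - j else j - m) : ℕ) : ℝ) := by
        rw [Nat.cast_prod]
    _ ≤ h ^ (N + 1) * (N + 1)! := by
        apply mul_le_mul_of_nonneg_left _ (by positivity)
        exact_mod_cast prod_nat_bound N m hmN



lemma poly_contDiff (p : Polynomial ℝ) (n : ℕ) : ContDiff ℝ n fun x => p.eval x := by
  induction p using Polynomial.induction_on' with
  | add f g hf hg => simpa [Polynomial.eval_add] using hf.add hg
  | monomial k c => simp only [Polynomial.eval_monomial]; exact contDiff_const.mul (contDiff_id.pow k)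


lemma interp_err (N : ℕ) (hN : 1 ≤ N) (t : ℕ → ℝ) (ht : ∀ j, t j = -1 + j * (2 / N))
    (g : ℝ → ℝ) (hg : ContDiffOn ℝ (N + 1) g (Icc (-1:ℝ) 1)) (M : ℝ)
    (hM : ∀ y ∈ Icc (-1:ℝ) 1, |iteratedDerivWithin (N + 1) g (Icc (-1:ℝ) 1) y| ≤ M)
    (x : ℝ) (hx : x ∈ Icc (-1:ℝ) 1) :
    |g x - (Lagrange.interpolate (Finset.range (N + 1)) t (fun j => g (t j))).eval x|
      ≤ (2 / N) ^ (N + 1) * M := by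
  classical
  have hNpos : (0:ℝ) < N := by exact_mod_cast hN
  have hhpos : (0:ℝ) < 2 / N := by positivity
  have hM0 : 0 ≤ M := le_trans (abs_nonneg _) (hM (-1) (by norm_num))
  have tmono : ∀ i j : ℕ, i < j → t i < t j := by
    intro i j hij
    rw [ht i, ht j]
    have : (i:ℝ) < j := by exact_mod_cast hij
    have := mul_lt_mul_of_pos_right this hhpos
    linarith
  have tinj : Set.InjOn t (Finset.range (N + 1) : Set ℕ) := by
    intro i _ j _ hij
    by_contra hne
    rcases lt_or_gt_of_ne hne with h | h
    · exact absurd hij (ne_of_lt (tmono i j h))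
    · exact absurd hij.symm (ne_of_lt (tmono j i h))
  have ht0 : t 0 = -1 := by rw [ht]; simp
  have htN : t N = 1 := by
    have h2 : (N:ℝ) * (2 / N) = 2 := by field_simp
    rw [ht, h2]; norm_num
  have htmem : ∀ j, j ≤ N → t j ∈ Icc (-1:ℝ) 1 := by
    intro j hj
    constructor
    · rw [ht]; have : (0:ℝ) ≤ j * (2/N) := by positivity
      linarith
    · rw [← htN, ht, ht]
      have : (j:ℝ) * (2/N) ≤ N * (2/N) := by
        apply mul_le_mul_of_nonneg_right _ hhpos.le
        exact_mod_cast hj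
      linarith
  set p : Polynomial ℝ := Lagrange.interpolate (Finset.range (N + 1)) t (fun j => g (t j)) with hp
  set E : ℝ := g x - p.eval x with hE
  by_cases hnode : ∃ j, j ≤ N ∧ t j = x
  · obtain ⟨j, hj, hjx⟩ := hnode
    have h0 : p.eval x = g x := by
      rw [← hjx, hp, Lagrange.eval_interpolate_at_node _ tinj (by simpa using (by omega : j < N + 1))]
    have hE0 : E = 0 := by rw [hE, h0]; ring
    rw [hE0, abs_zero]
    positivity
  push_neg at hnode
  have hxnode : ∀ j, j ≤ N → t j ≠ x := fun j hj => hnode j hj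
  set w : Polynomial ℝ := Lagrange.nodal (Finset.range (N + 1)) t with hw
  set W : ℝ := w.eval x with hW
  have hWval : W = ∏ j ∈ Finset.range (N + 1), (x - t j) := by
    rw [hW, hw, Lagrange.eval_nodal]
  have hWne : W ≠ 0 := by
    rw [hWval]
    apply Finset.prod_ne_zero_iff.mpr
    intro j hj
    simp only [Finset.mem_range] at hj
    exact sub_ne_zero_of_ne (fun h => hxnode j (by omega) h.symm)
  set r : Polynomial ℝ := Polynomial.C W * p + Polynomial.C E * w with hr
  set F : ℝ → ℝ := fun y => W * g y - r.eval y with hF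
  have hud : UniqueDiffOn ℝ (Icc (-1:ℝ) 1) := uniqueDiffOn_Icc (by norm_num)
  have hgW : ContDiffOn ℝ (N + 1) (fun y => W * g y) (Icc (-1:ℝ) 1) :=
    ContDiffOn.mul contDiffOn_const hg
  have hrc : ContDiffOn ℝ (N + 1) (fun y => r.eval y) (Icc (-1:ℝ) 1) :=
    (poly_contDiff r (N + 1)).contDiffOn
  have hFc : ContDiffOn ℝ (N + 1) F (Icc (-1:ℝ) 1) := by
    rw [hF]; exact hgW.sub hrc
  -- locate x between nodes
  have hxlow : t 0 < x := lt_of_le_of_ne (by rw [ht0]; exact hx.1) (hxnode 0 (by omega))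
  have hxhigh : x < t N := lt_of_le_of_ne (by rw [htN]; exact hx.2) (fun h => hxnode N le_rfl h.symm)
  set P : ℕ → Prop := fun i => t i < x with hP
  set i₀ : ℕ := Nat.findGreatest P N with hi₀
  have hPi₀ : P i₀ := Nat.findGreatest_spec (Nat.zero_le N) (show P 0 from hxlow)
  have hPi₀ : t i₀ < x := hPi₀
  have hi₀N : i₀ ≤ N := Nat.findGreatest_le N
  have hi₀lt : i₀ < N := by
    rcases Nat.lt_or_ge i₀ N with h | h
    · exact h
    · exfalso; have : i₀ = N := le_antisymm hi₀N h
      rw [this] at hPi₀; exact absurd hPi₀ (not_lt.mpr hxhigh.le)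
  have hxi₁ : x < t (i₀ + 1) := by
    have hng : ¬ P (i₀ + 1) := Nat.findGreatest_is_greatest (n := N) (by omega) (by omega)
    have hle : x ≤ t (i₀ + 1) := not_lt.mp hng
    exact lt_of_le_of_ne hle (fun h => hxnode (i₀+1) (by omega) h.symm)
  -- the N+2 zeros
  set z : ℕ → ℝ := fun i => if i ≤ i₀ then t i else if i = i₀ + 1 then x else t (i - 1) with hz
  have hFzero : ∀ j, j ≤ N → F (t j) = 0 := by
    intro j hj
    have hpj : p.eval (t j) = g (t j) :=
      Lagrange.eval_interpolate_at_node _ tinj (by simp; omega)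
    have hwj : w.eval (t j) = 0 := Lagrange.eval_nodal_at_node (by simp; omega)
    simp only [hF, hr, Polynomial.eval_add, Polynomial.eval_mul, Polynomial.eval_C, hpj, hwj]
    ring
  have hFx : F x = 0 := by
    simp only [hF, hr, Polynomial.eval_add, Polynomial.eval_mul, Polynomial.eval_C, ← hW, hE]
    ring
  obtain ⟨c, hc, hc0⟩ := gen_rolle (by norm_num : (-1:ℝ) < 1) (N + 1) F hFc z
    (by
      intro i hi
      rw [hz]
      simp only
      rcases Nat.lt_or_ge i i₀ with h | h
      · rw [if_pos (by omega), if_pos (by omega)]; exact tmono i (i+1) (by omega)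
      rcases Nat.eq_or_lt_of_le h with h' | h'
      · rw [if_pos (by omega), if_neg (by omega), if_pos (by omega)]; rw [← h']; exact hPi₀
      rcases Nat.eq_or_lt_of_le h' with h'' | h''
      · rw [if_neg (by omega), if_pos (by omega), if_neg (by omega), if_neg (by omega)]
        have : i + 1 - 1 = i₀ + 1 := by omega
        rw [this]; exact hxi₁
      · rw [if_neg (by omega), if_neg (by omega), if_neg (by omega), if_neg (by omega)]
        exact tmono (i-1) (i+1-1) (by omega))
    (by
      intro i hi
      rw [hz]; simp only
      rcases Nat.lt_or_ge i (i₀+1) with h | h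
      · rw [if_pos (by omega)]; exact htmem i (by omega)
      rcases Nat.eq_or_lt_of_le h with h' | h'
      · rw [if_neg (by omega), if_pos (by omega)]; exact hx
      · rw [if_neg (by omega), if_neg (by omega)]; exact htmem (i-1) (by omega))
    (by
      intro i hi
      rw [hz]; simp only
      rcases Nat.lt_or_ge i (i₀+1) with h | h
      · rw [if_pos (by omega)]; exact hFzero i (by omega)
      rcases Nat.eq_or_lt_of_le h with h' | h'
      · rw [if_neg (by omega), if_pos (by omega)]; exact hFx
      · rw [if_neg (by omega), if_neg (by omega)]; exact hFzero (i-1) (by omega))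
  -- compute the iterated derivative of F at c
  have hiterF : iteratedDerivWithin (N + 1) F (Icc (-1:ℝ) 1) c
      = W * iteratedDerivWithin (N + 1) g (Icc (-1:ℝ) 1) c - E * (N + 1)! := by
    have hsub : iteratedDerivWithin (N + 1) F (Icc (-1:ℝ) 1) c
        = iteratedDerivWithin (N + 1) (fun y => W * g y) (Icc (-1:ℝ) 1) c
          - iteratedDerivWithin (N + 1) (fun y => r.eval y) (Icc (-1:ℝ) 1) c := by
      rw [hF]
      exact iteratedDerivWithin_sub hc hud (by exact_mod_cast hgW.contDiffWithinAt hc) (by exact_mod_cast hrc.contDiffWithinAt hc)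
    have h1 : iteratedDerivWithin (N + 1) (fun y => W * g y) (Icc (-1:ℝ) 1) c
        = W * iteratedDerivWithin (N + 1) g (Icc (-1:ℝ) 1) c :=
      iteratedDerivWithin_const_mul hc hud W (by exact_mod_cast hg.contDiffWithinAt hc)
    have hpder : Polynomial.derivative^[N + 1] p = 0 := by
      by_cases hp0 : p = 0
      · rw [hp0]; simp
      apply Polynomial.iterate_derivative_eq_zero
      rw [Polynomial.natDegree_lt_iff_degree_lt hp0]
      have := Lagrange.degree_interpolate_lt (fun j => g (t j)) tinj
      rwa [Finset.card_range] at this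
    have hwder : Polynomial.derivative^[N + 1] w = Polynomial.C (((N + 1)! : ℕ) : ℝ) := by
      have hdeg : w.natDegree = N + 1 := by
        rw [hw, Lagrange.natDegree_nodal, Finset.card_range]
      have hle : (Polynomial.derivative^[N + 1] w).natDegree ≤ 0 := by
        have := Polynomial.natDegree_iterate_derivative w (N + 1)
        omega
      have := Polynomial.eq_C_of_natDegree_le_zero hle
      rw [this, Polynomial.coeff_iterate_derivative]
      congr 1
      have hmonic : w.Monic := Lagrange.nodal_monic
      have : w.coeff (0 + (N + 1)) = 1 := by
        rw [zero_add, ← hdeg]; exact hmonic.coeff_natDegree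
      rw [this, Nat.zero_add, Nat.descFactorial_self]
      simp
    have h2 : iteratedDerivWithin (N + 1) (fun y => r.eval y) (Icc (-1:ℝ) 1) c
        = E * (N + 1)! := by
      rw [polyIterDerivWithin hud (N + 1) r c hc, hr]
      have hradd : Polynomial.derivative^[N+1] (Polynomial.C W * p + Polynomial.C E * w)
          = Polynomial.C W * Polynomial.derivative^[N+1] p
            + Polynomial.C E * Polynomial.derivative^[N+1] w := by
        rw [iterate_map_add]
        · rw [Polynomial.iterate_derivative_C_mul, Polynomial.iterate_derivative_C_mul]
      rw [hradd, hpder, hwder]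
      simp [mul_comm]
    rw [hsub, h1, h2]
  rw [hiterF] at hc0
  have hWbound : |W| ≤ (2 / N) ^ (N + 1) * (N + 1)! := by
    rw [hWval, Finset.abs_prod]
    exact prod_bound N hN t ht x hx
  have hgc : |iteratedDerivWithin (N + 1) g (Icc (-1:ℝ) 1) c| ≤ M := hM c hc
  have hkey : |E| * (N + 1)! ≤ (2 / N) ^ (N + 1) * (N + 1)! * M := by
    have : E * (N + 1)! = W * iteratedDerivWithin (N + 1) g (Icc (-1:ℝ) 1) c := by linarith
    calc |E| * (N + 1)! = |E * (N + 1)!| := by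
          rw [abs_mul, abs_of_nonneg (by positivity : (0:ℝ) ≤ ((N+1)! : ℝ))]
      _ = |W| * |iteratedDerivWithin (N + 1) g (Icc (-1:ℝ) 1) c| := by rw [this, abs_mul]
      _ ≤ (2 / N) ^ (N + 1) * (N + 1)! * M := by
          apply mul_le_mul hWbound hgc (abs_nonneg _) (by positivity)
  have hfacpos : (0:ℝ) < (N + 1)! := by positivity
  calc |E| = |E| * (N + 1)! / (N + 1)! := by field_simp
    _ ≤ (2 / N) ^ (N + 1) * (N + 1)! * M / (N + 1)! := by
        gcongr
    _ = (2 / N) ^ (N + 1) * M := by field_simp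

end WithNat
section Hilbert


variable {E : Type*} [NormedAddCommGroup E] [InnerProductSpace ℂ E]

lemma norm_orth_sum {ι : Type*} {v : ι → E} (hv : Orthonormal ℂ v) (s : Finset ι)
    (c : ι → ℂ) : ‖∑ i ∈ s, c i • v i‖ ^ 2 = ∑ i ∈ s, ‖c i‖ ^ 2 := by
  have h1 : (‖∑ i ∈ s, c i • v i‖ : ℝ) ^ 2
      = RCLike.re (inner ℂ (∑ i ∈ s, c i • v i) (∑ i ∈ s, c i • v i)) :=
    norm_sq_eq_re_inner _
  rw [h1, hv.inner_sum c c s]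
  rw [map_sum]
  apply Finset.sum_congr rfl
  intro i _
  rw [RCLike.conj_mul]
  norm_cast

lemma proj_bessel {ι : Type*} {v : ι → E} (hv : Orthonormal ℂ v) (s : Finset ι) (x : E) :
    ‖x - ∑ i ∈ s, (inner ℂ (v i) x : ℂ) • v i‖ ≤ ‖x‖ := by
  set y := ∑ i ∈ s, (inner ℂ (v i) x : ℂ) • v i with hy
  have horth : (inner ℂ y (x - y) : ℂ) = 0 := by
    rw [inner_sub_right]
    have h1 : (inner ℂ y x : ℂ) = ∑ i ∈ s, (starRingEnd ℂ) (inner ℂ (v i) x : ℂ) * inner ℂ (v i) x := by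
      rw [hy, sum_inner]
      apply Finset.sum_congr rfl
      intro i _
      rw [inner_smul_left]
    have h2 : (inner ℂ y y : ℂ) = ∑ i ∈ s, (starRingEnd ℂ) (inner ℂ (v i) x : ℂ) * inner ℂ (v i) x :=
      hv.inner_sum _ _ s
    rw [h1, h2, sub_self]
  have hpyth : ‖x‖ ^ 2 = ‖y‖ ^ 2 + ‖x - y‖ ^ 2 := by
    have := norm_add_sq (𝕜 := ℂ) y (x - y)
    simp only [horth, map_zero, mul_zero, add_zero] at this
    simpa using this
  have h3 : ‖x - y‖ ^ 2 ≤ ‖x‖ ^ 2 := by nlinarith [sq_nonneg ‖y‖]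
  exact (pow_le_pow_iff_left₀ (norm_nonneg _) (norm_nonneg _) two_ne_zero).mp (by simpa using h3)

lemma tsvd_est {α : Type*} {m : MeasurableSpace α} {μ : Measure α} {n : ℕ}
    (L : EuclideanSpace ℂ (Fin n) →ₗ[ℂ] Lp ℂ 2 μ)
    (v : OrthonormalBasis (Fin n) ℂ (EuclideanSpace ℂ (Fin n)))
    (u : Fin n → Lp ℂ 2 μ) (hu : Orthonormal ℂ u)
    (σ : Fin n → ℝ) (hσ0 : ∀ j, 0 ≤ σ j) (hL : ∀ j, L (v j) = (σ j : ℂ) • u j)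
    (ε : ℝ) (hε : 0 < ε) (g : Lp ℂ 2 μ) (c : EuclideanSpace ℂ (Fin n)) :
    ‖g - ∑ j ∈ Finset.univ.filter (fun j => ε < σ j), (inner ℂ (u j) g : ℂ) • u j‖
      ≤ ‖g - L c‖ + ε * ‖c‖ := by
  classical
  set S := Finset.univ.filter (fun j => ε < σ j) with hS
  set d : Fin n → ℂ := fun j => v.repr c j with hd
  set p := L c with hp
  have hpsum : p = ∑ j, (d j * (σ j : ℂ)) • u j := by
    have := v.sum_repr c
    rw [hp, ← this, map_sum]
    apply Finset.sum_congr rfl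
    intro j _
    rw [LinearMap.map_smul, hL j, smul_smul]
  have hinner_p : ∀ i, (inner ℂ (u i) p : ℂ) = d i * (σ i : ℂ) := by
    intro i
    rw [hpsum]
    exact hu.inner_right_fintype _ i
  set x := g - p with hx
  have hsplit : g - ∑ j ∈ S, (inner ℂ (u j) g : ℂ) • u j
      = (x - ∑ j ∈ S, (inner ℂ (u j) x : ℂ) • u j)
        + (p - ∑ j ∈ S, (inner ℂ (u j) p : ℂ) • u j) := by
    rw [hx]
    have : ∀ j, (inner ℂ (u j) g : ℂ) = inner ℂ (u j) (g - p) + inner ℂ (u j) p := by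
      intro j; rw [inner_sub_right]; ring
    simp_rw [this, add_smul, Finset.sum_add_distrib]
    abel
  have hterm1 : ‖x - ∑ j ∈ S, (inner ℂ (u j) x : ℂ) • u j‖ ≤ ‖g - p‖ := by
    rw [← hx]; exact proj_bessel hu S x
  have hterm2 : ‖p - ∑ j ∈ S, (inner ℂ (u j) p : ℂ) • u j‖ ≤ ε * ‖c‖ := by
    have htail : p - ∑ j ∈ S, (inner ℂ (u j) p : ℂ) • u j
        = ∑ j ∈ Finset.univ.filter (fun j => ¬ ε < σ j), (d j * (σ j : ℂ)) • u j := by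
      simp_rw [hinner_p]
      rw [hpsum, ← Finset.sum_filter_add_sum_filter_not Finset.univ (fun j => ε < σ j)]
      rw [hS]
      abel
    rw [htail]
    have hsq : ‖∑ j ∈ Finset.univ.filter (fun j => ¬ ε < σ j), (d j * (σ j : ℂ)) • u j‖ ^ 2
        = ∑ j ∈ Finset.univ.filter (fun j => ¬ ε < σ j), ‖d j * (σ j : ℂ)‖ ^ 2 :=
      norm_orth_sum hu _ _
    have hcn : ‖c‖ ^ 2 = ∑ j, ‖d j‖ ^ 2 := by
      have h1 : ‖c‖ = ‖v.repr c‖ := (v.repr.norm_map c).symm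
      rw [h1, EuclideanSpace.norm_eq, Real.sq_sqrt (by positivity)]
    have hbound : ∑ j ∈ Finset.univ.filter (fun j => ¬ ε < σ j), ‖d j * (σ j : ℂ)‖ ^ 2
        ≤ ε ^ 2 * ‖c‖ ^ 2 := by
      rw [hcn, Finset.mul_sum]
      calc ∑ j ∈ Finset.univ.filter (fun j => ¬ ε < σ j), ‖d j * (σ j : ℂ)‖ ^ 2
          ≤ ∑ j ∈ Finset.univ.filter (fun j => ¬ ε < σ j), ε ^ 2 * ‖d j‖ ^ 2 := by
            apply Finset.sum_le_sum
            intro j hj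
            simp only [Finset.mem_filter, not_lt] at hj
            rw [norm_mul]
            have hσj : ‖((σ j : ℂ))‖ = σ j := by
              rw [Complex.norm_real, Real.norm_eq_abs, abs_of_nonneg (hσ0 j)]
            rw [hσj]
            have h1 : ‖d j‖ * σ j ≤ ‖d j‖ * ε := mul_le_mul_of_nonneg_left hj.2 (norm_nonneg _)
            have h0 : 0 ≤ ‖d j‖ * σ j := mul_nonneg (norm_nonneg _) (hσ0 j)
            have h2 := mul_self_le_mul_self h0 h1
            nlinarith [h2]
        _ ≤ ∑ j, ε ^ 2 * ‖d j‖ ^ 2 := by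
            apply Finset.sum_le_sum_of_subset_of_nonneg (Finset.filter_subset _ _)
            intro j _ _; positivity
    have h2 : ‖∑ j ∈ Finset.univ.filter (fun j => ¬ ε < σ j), (d j * (σ j : ℂ)) • u j‖ ^ 2
        ≤ (ε * ‖c‖) ^ 2 := by rw [hsq, mul_pow]; exact hbound
    exact (pow_le_pow_iff_left₀ (norm_nonneg _) (by positivity) two_ne_zero).mp h2
  calc ‖g - ∑ j ∈ S, (inner ℂ (u j) g : ℂ) • u j‖
      ≤ ‖x - ∑ j ∈ S, (inner ℂ (u j) x : ℂ) • u j‖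
        + ‖p - ∑ j ∈ S, (inner ℂ (u j) p : ℂ) • u j‖ := by rw [hsplit]; exact norm_add_le _ _
    _ ≤ ‖g - p‖ + ε * ‖c‖ := add_le_add hterm1 hterm2

end Hilbert


lemma L2_normsq {α : Type*} {m : MeasurableSpace α} {μ : Measure α} (h : Lp ℂ 2 μ) :
    ∫ x, ‖h x‖ ^ 2 ∂μ = ‖h‖ ^ 2 := by
  have h2 : ‖h‖ ^ 2 = RCLike.re (inner ℂ h h) := norm_sq_eq_re_inner h
  have h1 : (inner ℂ h h : ℂ) = ∫ x, (inner ℂ (h x) (h x) : ℂ) ∂μ := L2.inner_def h h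
  rw [h2, h1, ← integral_re (L2.integrable_inner h h)]
  apply integral_congr_ae
  filter_upwards with x
  rw [← norm_sq_eq_re_inner (𝕜 := ℂ) (h x)]

lemma Lp_norm_le_sqrt_two {μ : Measure ℝ} (hμ : μ = volume.restrict (Set.Ioc (-1:ℝ) 1))
    (h : Lp ℂ 2 μ) (C : ℝ) (hC : 0 ≤ C) (hb : ∀ᵐ x ∂μ, ‖h x‖ ≤ C) :
    ‖h‖ ≤ Real.sqrt 2 * C := by
  haveI : IsFiniteMeasure μ := by
    constructor
    rw [hμ, Measure.restrict_apply_univ]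
    exact measure_Ioc_lt_top
  have hμuniv : (μ Set.univ).toReal = 2 := by
    rw [hμ, Measure.restrict_apply_univ, Real.volume_Ioc]
    norm_num
  have hle : ‖h‖ ^ 2 ≤ 2 * C ^ 2 := by
    rw [← L2_normsq h]
    calc ∫ x, ‖h x‖ ^ 2 ∂μ ≤ ∫ _x, C ^ 2 ∂μ := by
          apply integral_mono_of_nonneg
          · filter_upwards with x; positivity
          · exact integrable_const _
          · filter_upwards [hb] with x hx
            have := mul_self_le_mul_self (norm_nonneg _) hx
            nlinarith
      _ = 2 * C ^ 2 := by rw [integral_const, measureReal_def, hμuniv, smul_eq_mul]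
  have h2 : (Real.sqrt 2 * C) ^ 2 = 2 * C ^ 2 := by
    rw [mul_pow, Real.sq_sqrt (by norm_num : (0:ℝ) ≤ 2)]
  refine (pow_le_pow_iff_left₀ (norm_nonneg _) (by positivity) two_ne_zero).mp ?_
  rw [h2]; exact hle

lemma piece {μ : Measure ℝ} (hμ : μ = volume.restrict (Set.Ioc (-1:ℝ) 1))
    (a' b' cc ss : ℝ) (hab : a' < b') (hcc : cc = (a' + b') / 2) (hss : ss = (b' - a') / 2)
    (g q : Lp ℂ 2 μ) (f : ℝ → ℝ)
    (hg : ∀ᵐ x ∂μ, g x = (f (cc + ss * x) : ℂ))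
    (hfm : MemLp (fun x => (f x : ℂ)) 2 (volume.restrict (Set.Ioc a' b')))
    (Pf : ℝ → ℂ) (hPf : ∀ x ∈ Set.Ico a' b', Pf x = q ((x - cc) / ss)) :
    (IntervalIntegrable (fun x => ‖(f x : ℂ) - Pf x‖ ^ 2) volume a' b') ∧
    ∫ x in Set.Ioc a' b', ‖(f x : ℂ) - Pf x‖ ^ 2 = ss * ‖g - q‖ ^ 2 := by
  subst hμ
  have hsspos : 0 < ss := by rw [hss]; linarith
  have hssne : ss ≠ 0 := ne_of_gt hsspos
  have ha' : ss * (-1) + cc = a' := by rw [hss, hcc]; ring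
  have hb' : ss * 1 + cc = b' := by rw [hss, hcc]; ring
  set φ : ℝ → ℝ := fun x => (x - cc) / ss with hφ
  have hφmeas : Measurable φ := by fun_prop
  have hφpre : φ ⁻¹' (Set.Ioc (-1:ℝ) 1) = Set.Ioc a' b' := by
    ext x
    simp only [Set.mem_preimage, Set.mem_Ioc, hφ]
    rw [lt_div_iff₀ hsspos, div_le_iff₀ hsspos]
    constructor
    · rintro ⟨h1, h2⟩; constructor <;> nlinarith
    · rintro ⟨h1, h2⟩; constructor <;> nlinarith
  have hmap : Measure.map φ (volume.restrict (Set.Ioc a' b')) = ENNReal.ofReal ss • (volume.restrict (Set.Ioc (-1:ℝ) 1)) := by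
    have h1 : Measure.map φ (volume.restrict (Set.Ioc a' b'))
        = (Measure.map φ volume).restrict (Set.Ioc (-1:ℝ) 1) := by
      rw [← hφpre, Measure.restrict_map hφmeas measurableSet_Ioc]
    have h2 : Measure.map φ volume = ENNReal.ofReal ss • volume := by
      have hcomp : φ = (fun y => y * ss⁻¹) ∘ (fun x => x + (-cc)) := by
        funext x; simp [hφ, div_eq_mul_inv, sub_eq_add_neg]
      rw [hcomp, ← Measure.map_map (by fun_prop) (by fun_prop)]
      rw [map_add_right_eq_self volume (-cc)]
      rw [Real.map_volume_mul_right (inv_ne_zero hssne)]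
      congr 1
      rw [abs_of_pos (by positivity : (0:ℝ) < ss⁻¹⁻¹), inv_inv]
    rw [h1, h2, Measure.restrict_smul]
  have hmp : MeasurePreserving φ (volume.restrict (Set.Ioc a' b')) (ENNReal.ofReal ss • (volume.restrict (Set.Ioc (-1:ℝ) 1))) :=
    ⟨hφmeas, hmap⟩
  have hqφ : MemLp (fun x => q (φ x)) 2 (volume.restrict (Set.Ioc a' b')) := by
    have h1 : MemLp (q : ℝ → ℂ) 2 (ENNReal.ofReal ss • (volume.restrict (Set.Ioc (-1:ℝ) 1))) :=
      (Lp.memLp q).smul_measure (by simp)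
    exact h1.comp_measurePreserving hmp
  have hGm : MemLp (fun x => (f x : ℂ) - q (φ x)) 2 (volume.restrict (Set.Ioc a' b')) :=
    hfm.sub hqφ
  have hGint : Integrable (fun x => ‖(f x : ℂ) - q (φ x)‖ ^ 2)
      (volume.restrict (Set.Ioc a' b')) :=
    ((memLp_two_iff_integrable_sq_norm hGm.aestronglyMeasurable).mp hGm)
  -- a.e. equality of the two integrands on Ioc a' b'
  have haeeq : ∀ᵐ x ∂(volume.restrict (Set.Ioc a' b')),
      ‖(f x : ℂ) - Pf x‖ ^ 2 = ‖(f x : ℂ) - q (φ x)‖ ^ 2 := by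
    have hsing : volume ({b'} : Set ℝ) = 0 := Real.volume_singleton
    have h1 : ∀ᵐ x ∂(volume.restrict (Set.Ioc a' b')), x ≠ b' := by
      rw [ae_restrict_iff' measurableSet_Ioc]
      filter_upwards [measure_eq_zero_iff_ae_notMem.mp hsing] with x hx _
      simpa using hx
    have h2 : ∀ᵐ x ∂(volume.restrict (Set.Ioc a' b')), x ∈ Set.Ioc a' b' :=
      ae_restrict_mem measurableSet_Ioc
    filter_upwards [h1, h2] with x hx hmem
    rw [hPf x ⟨le_of_lt hmem.1, lt_of_le_of_ne hmem.2 hx⟩]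
  have hint : IntegrableOn (fun x => ‖(f x : ℂ) - Pf x‖ ^ 2) (Set.Ioc a' b') volume :=
    hGint.congr (Filter.EventuallyEq.symm haeeq)
  constructor
  · exact (intervalIntegrable_iff_integrableOn_Ioc_of_le (le_of_lt hab)).mpr hint
  -- now the computation
  have step1 : ∫ x in Set.Ioc a' b', ‖(f x : ℂ) - Pf x‖ ^ 2
      = ∫ x in Set.Ioc a' b', ‖(f x : ℂ) - q (φ x)‖ ^ 2 :=
    integral_congr_ae haeeq
  have step2 : ∫ x in Set.Ioc a' b', ‖(f x : ℂ) - q (φ x)‖ ^ 2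
      = ss * ∫ t in Set.Ioc (-1:ℝ) 1, ‖(f (cc + ss * t) : ℂ) - q t‖ ^ 2 := by
    have h3 : (∫ t in (-1:ℝ)..1, (fun x => ‖(f x : ℂ) - q (φ x)‖ ^ 2) (ss * t + cc))
        = ss⁻¹ • ∫ x in (ss * (-1) + cc)..(ss * 1 + cc), ‖(f x : ℂ) - q (φ x)‖ ^ 2 :=
      intervalIntegral.integral_comp_mul_add (fun x => ‖(f x : ℂ) - q (φ x)‖ ^ 2) hssne cc
    rw [ha', hb'] at h3
    have h4 : ∀ t : ℝ, (fun x => ‖(f x : ℂ) - q (φ x)‖ ^ 2) (ss * t + cc)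
        = ‖(f (cc + ss * t) : ℂ) - q t‖ ^ 2 := by
      intro t
      have : φ (ss * t + cc) = t := by rw [hφ]; field_simp; ring
      simp only [this]
      ring_nf
    simp_rw [h4] at h3
    rw [← intervalIntegral.integral_of_le (le_of_lt hab),
      ← intervalIntegral.integral_of_le (by norm_num : (-1:ℝ) ≤ 1), h3, smul_eq_mul,
      ← mul_assoc, mul_inv_cancel₀ hssne, one_mul]
  have step3 : ∫ t in Set.Ioc (-1:ℝ) 1, ‖(f (cc + ss * t) : ℂ) - q t‖ ^ 2
      = ∫ t, ‖(g - q : Lp ℂ 2 (volume.restrict (Set.Ioc (-1:ℝ) 1))) t‖ ^ 2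
          ∂(volume.restrict (Set.Ioc (-1:ℝ) 1)) := by
    apply integral_congr_ae
    filter_upwards [hg, Lp.coeFn_sub g q] with t htg htsub  -- careful: coeFn_sub is ae wrt μ
    rw [htsub]
    simp only [Pi.sub_apply, htg]
  rw [step1, step2, step3, L2_normsq (g - q)]

end LLFPrelude

open Set Finset in
/-- Global quasi-optimal bound for the TSVD local Legendre frame approximation
(Corollary 2.4): with a partition `a = A 0 < ⋯ < A K = b` of maximal length `h_I`,
`f ∈ C^{N+1}[a,b]` with `‖f^{(N+1)}‖_∞ ≤ C_f`, local rescaled functions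
`g_k(t) = f(c_k + s_k t)` (regarded in `L²(-1,1)`), a linear map
`L : ℂ^{N+1} → L²(-1,1)` with SVD `L (v j) = σ j • u j`, TSVD threshold `ε > 0`, and
vectors `cint k` with `L (cint k)` equal in `L²(-1,1)` to the degree-`N` equispaced Lagrange
interpolant of `g_k`, the piecewise approximation `(P f)(x) = (Q_ε g_k)((x - c_k)/s_k)`
satisfies
`‖f - P f‖²_{L²(a,b)} ≤ ∑_k s_k (√2 * h_I^(N+1)/N^(N+1) * C_f + ε ‖cint k‖₂)²`. -/
theorem llf_global_quasi_optimal (N : ℕ) (hN : 1 ≤ N)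
    (t : ℕ → ℝ) (ht : ∀ j, t j = -1 + j * (2 / N))
    (a b : ℝ) (K : ℕ) (hK : 1 ≤ K)
    (A : ℕ → ℝ) (hA0 : A 0 = a) (hAK : A K = b)
    (hmono : ∀ k, k < K → A k < A (k + 1))
    (cc ss : ℕ → ℝ)
    (hcc : ∀ k, cc k = (A (k - 1) + A k) / 2)
    (hss : ∀ k, ss k = (A k - A (k - 1)) / 2)
    (hI : ℝ)
    (hhI : hI = (Finset.Icc 1 K).sup' (Finset.nonempty_Icc.mpr hK)
      (fun k => A k - A (k - 1)))
    (f : ℝ → ℝ) (Cf : ℝ)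
    (hf : ContDiffOn ℝ (N + 1) f (Set.Icc a b))
    (hbound : ∀ x ∈ Set.Icc a b, |iteratedDerivWithin (N + 1) f (Set.Icc a b) x| ≤ Cf)
    (μ : Measure ℝ) (hμ : μ = volume.restrict (Set.Ioc (-1 : ℝ) 1))
    (L : EuclideanSpace ℂ (Fin (N + 1)) →ₗ[ℂ] Lp ℂ 2 μ)
    (v : OrthonormalBasis (Fin (N + 1)) ℂ (EuclideanSpace ℂ (Fin (N + 1))))
    (u : Fin (N + 1) → Lp ℂ 2 μ) (hu : Orthonormal ℂ u)
    (σ : Fin (N + 1) → ℝ) (hσ0 : ∀ j, 0 ≤ σ j)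
    (hL : ∀ j, L (v j) = (σ j : ℂ) • u j)
    (ε : ℝ) (hε : 0 < ε)
    -- the local functions `g_k` regarded as elements of `L²(-1,1)`
    (gL : ℕ → Lp ℂ 2 μ)
    (hgL : ∀ k ∈ Finset.Icc 1 K, ∀ᵐ x ∂μ, gL k x = (f (cc k + ss k * x) : ℂ))
    -- the TSVD-regularized approximations `Q_ε g_k`
    (Q : ℕ → Lp ℂ 2 μ)
    (hQ : ∀ k, Q k = ∑ j ∈ Finset.univ.filter (fun j => ε < σ j),
      (inner ℂ (u j) (gL k) : ℂ) • u j)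
    -- coefficient vectors representing the local Lagrange interpolants
    (cint : ℕ → EuclideanSpace ℂ (Fin (N + 1)))
    (hcint : ∀ k ∈ Finset.Icc 1 K, ∀ᵐ x ∂μ, (L (cint k)) x =
      (((Lagrange.interpolate (Finset.range (N + 1)) t
          (fun j => f (cc k + ss k * t j))).eval x : ℝ) : ℂ))
    -- the global piecewise approximation
    (Pf : ℝ → ℂ)
    (hPf : ∀ k ∈ Finset.Icc 1 K, ∀ x ∈ Set.Ico (A (k - 1)) (A k),
      Pf x = (Q k) ((x - cc k) / ss k)) :
    ∫ x in Set.Ioc a b, ‖(f x : ℂ) - Pf x‖ ^ 2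
      ≤ ∑ k ∈ Finset.Icc 1 K, ss k *
          (Real.sqrt 2 * (hI ^ (N + 1) / (N : ℝ) ^ (N + 1)) * Cf + ε * ‖cint k‖) ^ 2 := by
  subst hμ
  have hAle : ∀ j, j ≤ K → ∀ i, i ≤ j → A i ≤ A j := by
    intro j
    induction j with
    | zero =>
      intro _ i hi
      have : i = 0 := by omega
      rw [this]
    | succ m ih =>
      intro hm i hi
      rcases Nat.lt_or_ge i (m+1) with h | h
      · exact le_trans (ih (by omega) i (by omega)) (le_of_lt (hmono m (by omega)))
      · have : i = m + 1 := by omega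
        rw [this]
  have hab : a < b := by
    rw [← hA0, ← hAK]
    calc A 0 ≤ A (K-1) := hAle (K-1) (by omega) 0 (by omega)
      _ < A K := by
          have := hmono (K-1) (by omega)
          rwa [Nat.sub_add_cancel hK] at this
  have hNpos : (0:ℝ) < N := by exact_mod_cast hN
  have hCf0 : 0 ≤ Cf := le_trans (abs_nonneg _) (hbound a ⟨le_rfl, hab.le⟩)
  have hssub : ∀ k, 1 ≤ k → k ≤ K → A (k-1) < A k := by
    intro k h1 h2
    have := hmono (k-1) (by omega)
    rwa [Nat.sub_add_cancel h1] at this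
  have hsspos : ∀ k, 1 ≤ k → k ≤ K → 0 < ss k := by
    intro k h1 h2; rw [hss]; have := hssub k h1 h2; linarith
  have hsshI : ∀ k, 1 ≤ k → k ≤ K → ss k ≤ hI / 2 := by
    intro k h1 h2
    rw [hss, hhI]
    have hle : A k - A (k-1) ≤ (Finset.Icc 1 K).sup' (Finset.nonempty_Icc.mpr hK)
        (fun k => A k - A (k - 1)) :=
      Finset.le_sup' (fun k => A k - A (k - 1)) (Finset.mem_Icc.mpr ⟨h1, h2⟩)
    linarith
  have hIpos : 0 < hI := by
    have h1 := hsspos K hK le_rfl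
    have h2 := hsshI K hK le_rfl
    linarith
  have hsub : ∀ k, 1 ≤ k → k ≤ K → Set.Icc (A (k-1)) (A k) ⊆ Set.Icc a b := by
    intro k h1 h2
    apply Set.Icc_subset_Icc
    · rw [← hA0]; exact hAle (k-1) (by omega) 0 (by omega)
    · rw [← hAK]; exact hAle K le_rfl k h2
  obtain ⟨Cb, hCb⟩ :=
    (isCompact_Icc (a := a) (b := b)).exists_bound_of_continuousOn hf.continuousOn
  have hfm : ∀ k, 1 ≤ k → k ≤ K →
      MemLp (fun x => (f x : ℂ)) 2 (volume.restrict (Set.Ioc (A (k-1)) (A k))) := by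
    intro k h1 h2
    haveI : IsFiniteMeasure (volume.restrict (Set.Ioc (A (k-1)) (A k))) :=
      ⟨by rw [Measure.restrict_apply_univ]; exact measure_Ioc_lt_top⟩
    have hcont : ContinuousOn (fun x => (f x : ℂ)) (Set.Ioc (A (k-1)) (A k)) :=
      Complex.continuous_ofReal.comp_continuousOn
        (hf.continuousOn.mono (subset_trans Set.Ioc_subset_Icc_self (hsub k h1 h2)))
    apply MemLp.of_bound (hcont.aestronglyMeasurable measurableSet_Ioc) Cb
    filter_upwards [ae_restrict_mem measurableSet_Ioc] with x hx
    have hx' : x ∈ Set.Icc a b := (hsub k h1 h2) (Set.Ioc_subset_Icc_self hx)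
    simpa using hCb x hx'
  have hf' : ContDiffOn ℝ ((N + 1 : ℕ) : WithTop ℕ∞) f (Set.Icc a b) := by
    exact_mod_cast hf
  set B : ℝ := Real.sqrt 2 * (hI ^ (N+1) / (N:ℝ) ^ (N+1)) * Cf with hB
  have hnorm : ∀ k, 1 ≤ k → k ≤ K → ‖gL k - Q k‖ ≤ B + ε * ‖cint k‖ := by
    intro k h1 h2
    have hkI : k ∈ Finset.Icc 1 K := Finset.mem_Icc.mpr ⟨h1, h2⟩
    have htsvd : ‖gL k - Q k‖ ≤ ‖gL k - L (cint k)‖ + ε * ‖cint k‖ := by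
      rw [hQ k]
      exact tsvd_est L v u hu σ hσ0 hL ε hε (gL k) (cint k)
    set gk : ℝ → ℝ := fun t' => f (cc k + ss k * t') with hgk
    have hmapk : ∀ t' ∈ Set.Icc (-1:ℝ) 1, cc k + ss k * t' ∈ Set.Icc a b := by
      intro t' ht'
      apply hsub k h1 h2
      have hAlt := hssub k h1 h2
      constructor
      · rw [hcc, hss]; nlinarith [ht'.1, ht'.2]
      · rw [hcc, hss]; nlinarith [ht'.1, ht'.2]
    have hgkc : ContDiffOn ℝ ((N + 1 : ℕ) : WithTop ℕ∞) gk (Set.Icc (-1:ℝ) 1) := by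
      apply hf'.comp
      · exact (contDiff_const.add (contDiff_const.mul contDiff_id)).contDiffOn
      · intro t' ht'; exact hmapk t' ht'
    have hMk : ∀ y ∈ Set.Icc (-1:ℝ) 1,
        |iteratedDerivWithin (N+1) gk (Set.Icc (-1:ℝ) 1) y| ≤ ss k ^ (N+1) * Cf := by
      intro y hy
      rw [iter_affine (hsspos k h1 h2) hab hf' hmapk (N+1) le_rfl y hy]
      rw [abs_mul, abs_of_nonneg (pow_nonneg (hsspos k h1 h2).le _)]
      exact mul_le_mul_of_nonneg_left (hbound _ (hmapk y hy))
        (pow_nonneg (hsspos k h1 h2).le _)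
    have hptw : ∀ x ∈ Set.Icc (-1:ℝ) 1,
        |gk x - (Lagrange.interpolate (Finset.range (N+1)) t (fun j => gk (t j))).eval x|
          ≤ hI ^ (N+1) / (N:ℝ) ^ (N+1) * Cf := by
      intro x hx
      have h5 := interp_err N hN t ht gk (by exact_mod_cast hgkc) (ss k ^ (N+1) * Cf) hMk x hx
      apply le_trans h5
      have h7 : (2 / (N:ℝ)) * ss k ≤ hI / N := by
        have h8 := hsshI k h1 h2
        have h9 : (2 / (N:ℝ)) * ss k ≤ (2 / N) * (hI / 2) :=
          mul_le_mul_of_nonneg_left h8 (by positivity)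
        calc (2 / (N:ℝ)) * ss k ≤ (2 / N) * (hI / 2) := h9
          _ = hI / N := by field_simp
      calc (2 / (N:ℝ)) ^ (N+1) * (ss k ^ (N+1) * Cf)
          = ((2 / N) * ss k) ^ (N+1) * Cf := by rw [mul_pow]; ring
        _ ≤ (hI / N) ^ (N+1) * Cf := by
            apply mul_le_mul_of_nonneg_right _ hCf0
            exact pow_le_pow_left₀ (mul_nonneg (by positivity) (hsspos k h1 h2).le) h7 _
        _ = hI ^ (N+1) / (N:ℝ) ^ (N+1) * Cf := by rw [div_pow]
    have haebound : ∀ᵐ x ∂(volume.restrict (Set.Ioc (-1:ℝ) 1)),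
        ‖(gL k - L (cint k) : Lp ℂ 2 (volume.restrict (Set.Ioc (-1:ℝ) 1))) x‖
          ≤ hI ^ (N+1) / (N:ℝ) ^ (N+1) * Cf := by
      filter_upwards [hgL k hkI, hcint k hkI, Lp.coeFn_sub (gL k) (L (cint k)),
        ae_restrict_mem measurableSet_Ioc] with x h1x h2x h3x h4x
      rw [h3x]
      simp only [Pi.sub_apply, h1x, h2x]
      rw [← Complex.ofReal_sub, Complex.norm_real]
      exact hptw x (Set.Ioc_subset_Icc_self h4x)
    have hL2 : ‖gL k - L (cint k)‖ ≤ Real.sqrt 2 * (hI ^ (N+1) / (N:ℝ) ^ (N+1) * Cf) :=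
      Lp_norm_le_sqrt_two rfl _ _ (by positivity) haebound
    calc ‖gL k - Q k‖ ≤ ‖gL k - L (cint k)‖ + ε * ‖cint k‖ := htsvd
      _ ≤ B + ε * ‖cint k‖ := by
          rw [hB, mul_assoc]
          exact add_le_add_left hL2 _
  set F : ℝ → ℝ := fun x => ‖(f x : ℂ) - Pf x‖ ^ 2 with hFdef
  have hpiece : ∀ i, i < K →
      IntervalIntegrable F volume (A i) (A (i+1)) ∧
      ∫ x in Set.Ioc (A i) (A (i+1)), F x = ss (i+1) * ‖gL (i+1) - Q (i+1)‖ ^ 2 := by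
    intro i hi
    have h1 : 1 ≤ i + 1 := by omega
    have h2 : i + 1 ≤ K := by omega
    exact piece rfl (A i) (A (i+1)) (cc (i+1)) (ss (i+1))
      (hmono i hi) (hcc (i+1)) (hss (i+1))
      (gL (i+1)) (Q (i+1)) f (hgL (i+1) (Finset.mem_Icc.mpr ⟨h1, h2⟩))
      (hfm (i+1) h1 h2)
      Pf (hPf (i+1) (Finset.mem_Icc.mpr ⟨h1, h2⟩))
  have hab0 : A 0 ≤ A K := by rw [hA0, hAK]; exact hab.le
  have hsum : ∫ x in Set.Ioc a b, F x
      = ∑ i ∈ Finset.range K, (ss (i+1) * ‖gL (i+1) - Q (i+1)‖ ^ 2) := by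
    rw [← hA0, ← hAK]
    calc ∫ x in Set.Ioc (A 0) (A K), F x
        = ∫ x in (A 0)..(A K), F x := (intervalIntegral.integral_of_le hab0).symm
      _ = ∑ i ∈ Finset.range K, ∫ x in (A i)..(A (i+1)), F x :=
          (intervalIntegral.sum_integral_adjacent_intervals
            (fun i hi => (hpiece i hi).1)).symm
      _ = ∑ i ∈ Finset.range K, (ss (i+1) * ‖gL (i+1) - Q (i+1)‖ ^ 2) := by
          apply Finset.sum_congr rfl
          intro i hi
          simp only [Finset.mem_range] at hi
          rw [intervalIntegral.integral_of_le (hmono i hi).le]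
          exact (hpiece i hi).2
  rw [show (∫ x in Set.Ioc a b, ‖(f x : ℂ) - Pf x‖ ^ 2) = ∫ x in Set.Ioc a b, F x from rfl,
    hsum, ← Finset.Ico_add_one_right_eq_Icc, Finset.sum_Ico_eq_sum_range]
  rw [show K + 1 - 1 = K by omega]
  apply Finset.sum_le_sum
  intro i hi
  simp only [Finset.mem_range] at hi
  rw [show 1 + i = i + 1 by omega]
  apply mul_le_mul_of_nonneg_left _ (hsspos (i+1) (by omega) (by omega)).le
  exact pow_le_pow_left₀ (norm_nonneg _) (hnorm (i+1) (by omega) (by omega)) 2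
end
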